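/- arXiv:1505.00459 — 2 statements merged into one kernel-verified Lean document; each statement's English description precedes it below -/
import Mathlib

section
/- Every strictly convex norm on ℝ² is a URTC-norm. -/
/-- `N` is a norm on `ℝ²`. -/
structure IsNorm (N : ℝ × ℝ → ℝ) : Prop where
  add_le : ∀ x y : ℝ × ℝ, N (x + y) ≤ N x + N y
  smul_eq : ∀ (c : ℝ) (x : ℝ × ℝ), N (c • x) = |c| * N x
  eq_zero_of : ∀ x : ℝ × ℝ, N x = 0 → x = 0

/-- `N` is a URTC-norm: for every `a b` at `N`-distance `1`, there are exactly two
points `x` with `N (a - x) = 1` and `N (b - x) = 1`. -/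
def IsURTC (N : ℝ × ℝ → ℝ) : Prop :=
  ∀ a b : ℝ × ℝ, N (a - b) = 1 →
    {x : ℝ × ℝ | N (a - x) = 1 ∧ N (b - x) = 1}.encard = 2

namespace URTCaux

variable {N : ℝ × ℝ → ℝ}

lemma nzero (hN : IsNorm N) : N 0 = 0 := by
  have := hN.smul_eq 0 0
  simpa using this

lemma nneg (hN : IsNorm N) (x : ℝ × ℝ) : N (-x) = N x := by
  have := hN.smul_eq (-1) x
  simpa using this

lemma nonneg (hN : IsNorm N) (x : ℝ × ℝ) : 0 ≤ N x := by
  have h := hN.add_le x (-x)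
  rw [add_neg_cancel, nzero hN, nneg hN] at h
  linarith

lemma conv (hN : IsNorm N) (x y : ℝ × ℝ) {t : ℝ} (h0 : 0 ≤ t) (h1 : t ≤ 1) :
    N ((1 - t) • x + t • y) ≤ (1 - t) * N x + t * N y := by
  calc N ((1 - t) • x + t • y) ≤ N ((1 - t) • x) + N (t • y) := hN.add_le _ _
  _ = (1 - t) * N x + t * N y := by
      rw [hN.smul_eq, hN.smul_eq, abs_of_nonneg h0, abs_of_nonneg (by linarith)]

lemma ncont (hN : IsNorm N) : Continuous N := by
  have key : ∀ x y : ℝ × ℝ, N x - N y ≤ N (x - y) := by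
    intro x y
    have := hN.add_le (x - y) y
    simp only [sub_add_cancel] at this
    linarith
  have bnd : ∀ z : ℝ × ℝ, N z ≤ (N (1,0) + N (0,1)) * ‖z‖ := by
    intro z
    have hz : z = z.1 • ((1:ℝ),(0:ℝ)) + z.2 • ((0:ℝ),(1:ℝ)) := by
      simp [Prod.ext_iff]
    have h1 : N z ≤ |z.1| * N (1,0) + |z.2| * N (0,1) := by
      calc N z = N (z.1 • ((1:ℝ),(0:ℝ)) + z.2 • ((0:ℝ),(1:ℝ))) := by rw [← hz]
      _ ≤ N (z.1 • ((1:ℝ),(0:ℝ))) + N (z.2 • ((0:ℝ),(1:ℝ))) := hN.add_le _ _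
      _ = |z.1| * N (1,0) + |z.2| * N (0,1) := by rw [hN.smul_eq, hN.smul_eq]
    have hz1 : |z.1| ≤ ‖z‖ := by
      rw [Prod.norm_def]; exact le_max_of_le_left (le_of_eq (Real.norm_eq_abs _).symm)
    have hz2 : |z.2| ≤ ‖z‖ := by
      rw [Prod.norm_def]; exact le_max_of_le_right (le_of_eq (Real.norm_eq_abs _).symm)
    nlinarith [nonneg hN ((1,0) : ℝ × ℝ), nonneg hN ((0,1) : ℝ × ℝ), abs_nonneg z.1, abs_nonneg z.2]
  rw [Metric.continuous_iff]
  intro x ε hε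
  set C := N (1,0) + N (0,1) with hC
  have hC0 : 0 ≤ C := by
    have := nonneg hN ((1,0) : ℝ × ℝ); have := nonneg hN ((0,1) : ℝ × ℝ)
    simp only [hC]; linarith
  refine ⟨ε / (C + 1), by positivity, fun y hy => ?_⟩
  have h1 : N y - N x ≤ C * ‖y - x‖ := le_trans (key y x) (bnd _)
  have h2 : N x - N y ≤ C * ‖x - y‖ := le_trans (key x y) (bnd _)
  rw [norm_sub_rev] at h2
  have hd : dist y x = ‖y - x‖ := dist_eq_norm _ _
  rw [Real.dist_eq]
  rw [hd] at hy
  have hyx : ‖y - x‖ < ε / (C + 1) := hy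
  have hcc : C * ‖y - x‖ < ε := by
    calc C * ‖y - x‖ ≤ (C+1) * ‖y - x‖ := by nlinarith [norm_nonneg (y - x)]
    _ < (C+1) * (ε / (C+1)) := by nlinarith
    _ = ε := by field_simp
  rw [abs_lt]; constructor <;> linarith

/-- B: interior point of a chord on the sphere forces endpoints equal. -/
lemma lemB (hN : IsNorm N)
    (hSC : ∀ x y : ℝ × ℝ, N x = 1 → N y = 1 →
      segment ℝ x y ⊆ {z : ℝ × ℝ | N z = 1} → x = y)
    {a b : ℝ × ℝ} (ha : N a = 1) (hb : N b = 1) {μ : ℝ} (h0 : 0 < μ) (h1 : μ < 1)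
    (hm : N ((1 - μ) • a + μ • b) = 1) : a = b := by
  apply hSC a b ha hb
  rintro z ⟨s, t, hs, ht, hst, rfl⟩
  have htt : t = 1 - s := by linarith
  subst htt
  have hupper : N (s • a + (1 - s) • b) ≤ 1 := by
    have := conv hN a b (t := 1 - s) (by linarith) (by linarith)
    simp only [sub_sub_cancel] at this
    rw [ha, hb] at this; linarith
  have hlower : 1 ≤ N (s • a + (1 - s) • b) := by
    set z := s • a + (1 - s) • b with hz
    by_cases hcmp : 1 - s ≤ μ
    · have hs0 : 0 < s := by linarith
      set ρ := (μ - (1 - s)) / s with hρ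
      have hρ0 : 0 ≤ ρ := div_nonneg (by linarith) (le_of_lt hs0)
      have hρ1 : ρ < 1 := by
        rw [hρ, div_lt_one hs0]; linarith
      have hcomb : (1 - μ) • a + μ • b = (1 - ρ) • z + ρ • b := by
        rw [hz, hρ]
        match_scalars <;> field_simp <;> try ring
      have := conv hN z b hρ0 (le_of_lt hρ1)
      rw [← hcomb, hm, hb] at this
      nlinarith
    · push_neg at hcmp
      have hs1 : 0 < 1 - s := by linarith
      set ρ := ((1 - s) - μ) / (1 - s) with hρ
      have hρ0 : 0 ≤ ρ := div_nonneg (by linarith) (le_of_lt hs1)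
      have hρ1 : ρ < 1 := by
        rw [hρ, div_lt_one hs1]; linarith
      have hcomb : (1 - μ) • a + μ • b = (1 - ρ) • z + ρ • a := by
        rw [hz, hρ]
        match_scalars <;> field_simp <;> try ring
      have := conv hN z a hρ0 (le_of_lt hρ1)
      rw [← hcomb, hm, ha] at this
      nlinarith
  exact le_antisymm hupper hlower

lemma lemB' (hN : IsNorm N)
    (hSC : ∀ x y : ℝ × ℝ, N x = 1 → N y = 1 →
      segment ℝ x y ⊆ {z : ℝ × ℝ | N z = 1} → x = y)
    {a b : ℝ × ℝ} (ha : N a = 1) (hb : N b ≤ 1) {μ : ℝ} (h0 : 0 < μ) (h1 : μ < 1)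
    (hm : N ((1 - μ) • a + μ • b) = 1) : a = b := by
  have hb1 : N b = 1 := by
    have := conv hN a b (le_of_lt h0) (le_of_lt h1)
    rw [hm, ha] at this
    nlinarith
  exact lemB hN hSC ha hb1 h0 h1 hm

/-- two points with equal cross product with `v` differ by a multiple of `v`. -/
lemma collin {v z z' : ℝ × ℝ} (hv : v ≠ 0)
    (h : z.1 * v.2 - z.2 * v.1 = z'.1 * v.2 - z'.2 * v.1) : ∃ c : ℝ, z = z' + c • v := by
  by_cases hv1 : v.1 = 0
  · have hv2 : v.2 ≠ 0 := fun hv2 => hv (Prod.ext hv1 hv2)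
    have h1 : z.1 = z'.1 := by
      rw [hv1] at h
      have : (z.1 - z'.1) * v.2 = 0 := by ring_nf; linarith
      rcases mul_eq_zero.1 this with h' | h'
      · linarith
      · exact absurd h' hv2
    exact ⟨(z.2 - z'.2) / v.2, Prod.ext (by simp [h1, hv1]) (by simp; field_simp; ring)⟩
  · refine ⟨(z.1 - z'.1) / v.1, Prod.ext (by simp; field_simp; ring) ?_⟩
    simp only [Prod.snd_add, Prod.smul_snd, smul_eq_mul]
    field_simp
    nlinarith [h]

/-- L1: two circle-intersection points on the same `v`-line are equal. -/
lemma lemL1 (hN : IsNorm N)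
    (hSC : ∀ x y : ℝ × ℝ, N x = 1 → N y = 1 →
      segment ℝ x y ⊆ {z : ℝ × ℝ | N z = 1} → x = y)
    {v p q : ℝ × ℝ} (hv : v ≠ 0)
    (hp1 : N p = 1) (hp2 : N (p - v) = 1) (hq1 : N q = 1) (hq2 : N (q - v) = 1)
    {c : ℝ} (hc : q = p + c • v) : p = q := by
  rcases lt_trichotomy c 0 with hc0 | hc0 | hc0
  · set μ := 1 / (1 - c) with hμ
    have h1c : (0:ℝ) < 1 - c := by linarith
    have hμ0 : 0 < μ := by positivity
    have hμ1 : μ < 1 := by rw [hμ, div_lt_one h1c]; linarith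
    have hmid : q = (1 - μ) • (q - v) + μ • p := by
      have hp' : p = q - c • v := by rw [hc]; abel
      rw [hp', hμ]; match_scalars <;> field_simp <;> try ring
    have heq := lemB' hN hSC hq2 (le_of_eq hp1) hμ0 hμ1 (by rw [← hmid]; exact hq1)
    exfalso
    have hp' : p = q - c • v := by rw [hc]; abel
    have e : (1 - c) • v = (q - c • v) - (q - v) := by module
    rw [← hp', heq, sub_self] at e
    rcases smul_eq_zero.1 e with h' | h'
    · linarith
    · exact hv h'
  · rw [hc, hc0, zero_smul, add_zero]
  · set μ := 1 / (1 + c) with hμ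
    have h1c : (0:ℝ) < 1 + c := by linarith
    have hμ0 : 0 < μ := by positivity
    have hμ1 : μ < 1 := by rw [hμ, div_lt_one h1c]; linarith
    have hmid : p = (1 - μ) • (p - v) + μ • q := by
      rw [hc, hμ]; match_scalars <;> field_simp <;> try ring
    have heq := lemB' hN hSC hp2 (le_of_eq hq1) hμ0 hμ1 (by rw [← hmid]; exact hp1)
    exfalso
    have e : (1 + c) • v = (p + c • v) - (p - v) := by module
    rw [← hc, ← heq, sub_self] at e
    rcases smul_eq_zero.1 e with h' | h'
    · linarith
    · exact hv h'

/-- L2: no intersection point with cross-coordinate strictly between two others. -/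
lemma lemL2 (hN : IsNorm N)
    (hSC : ∀ x y : ℝ × ℝ, N x = 1 → N y = 1 →
      segment ℝ x y ⊆ {z : ℝ × ℝ | N z = 1} → x = y)
    {v p q r : ℝ × ℝ} (hv : v ≠ 0)
    (hp1 : N p = 1) (hp2 : N (p - v) = 1) (hq1 : N q = 1) (hq2 : N (q - v) = 1)
    (hr1 : N r = 1) (hr2 : N (r - v) = 1)
    (h1 : p.1 * v.2 - p.2 * v.1 < q.1 * v.2 - q.2 * v.1)
    (h2 : q.1 * v.2 - q.2 * v.1 < r.1 * v.2 - r.2 * v.1) : False := by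
  set tp := p.1 * v.2 - p.2 * v.1 with htp
  set tq := q.1 * v.2 - q.2 * v.1 with htq
  set tr := r.1 * v.2 - r.2 * v.1 with htr
  set l := (tq - tp) / (tr - tp) with hl
  have hpr : (0:ℝ) < tr - tp := by linarith
  have hl0 : 0 < l := div_pos (by linarith) hpr
  have hl1 : l < 1 := by rw [hl, div_lt_one hpr]; linarith
  set q' := (1 - l) • p + l • r with hq'
  have hq'N : N q' ≤ 1 := by
    have := conv hN p r (le_of_lt hl0) (le_of_lt hl1)
    rw [hp1, hr1] at this; rw [hq']; linarith
  have hq'vN : N (q' - v) ≤ 1 := by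
    have hid : q' - v = (1 - l) • (p - v) + l • (r - v) := by
      rw [hq']; module
    have := conv hN (p - v) (r - v) (le_of_lt hl0) (le_of_lt hl1)
    rw [hp2, hr2, ← hid] at this; linarith
  have hcross : q.1 * v.2 - q.2 * v.1 = q'.1 * v.2 - q'.2 * v.1 := by
    have e1 : q'.1 = (1 - l) * p.1 + l * r.1 := by rw [hq']; simp
    have e2 : q'.2 = (1 - l) * p.2 + l * r.2 := by rw [hq']; simp
    rw [e1, e2]
    have hkey : tq = tp + l * (tr - tp) := by
      rw [hl]; field_simp; ring
    rw [htq, htp, htr] at hkey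
    rw [← htq, htq]
    nlinarith [hkey]
  obtain ⟨c, hc⟩ := collin hv hcross
  have hq'' : q' = q - c • v := by rw [hc]; abel
  rcases lt_trichotomy c 0 with hc0 | hc0 | hc0
  · set μ := 1 / (1 - c) with hμ
    have h1c : (0:ℝ) < 1 - c := by linarith
    have hμ0 : 0 < μ := by positivity
    have hμ1 : μ < 1 := by rw [hμ, div_lt_one h1c]; linarith
    have hmid : q = (1 - μ) • (q - v) + μ • q' := by
      rw [hq'', hμ]; match_scalars <;> field_simp <;> try ring
    have heq := lemB' hN hSC hq2 hq'N hμ0 hμ1 (by rw [← hmid]; exact hq1)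
    have e : (1 - c) • v = (q - c • v) - (q - v) := by module
    rw [← hq'', ← heq, sub_self] at e
    rcases smul_eq_zero.1 e with h' | h'
    · linarith
    · exact hv h'
  · have hqq : q = q' := by rw [hc, hc0, zero_smul, add_zero]
    have hpr' := lemB hN hSC hp1 hr1 hl0 hl1 (by rw [← hq', ← hqq]; exact hq1)
    have : tp = tr := by rw [htp, htr, hpr']
    linarith
  · set μ := 1 / (1 + c) with hμ
    have h1c : (0:ℝ) < 1 + c := by linarith
    have hμ0 : 0 < μ := by positivity
    have hμ1 : μ < 1 := by rw [hμ, div_lt_one h1c]; linarith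
    have hmid : q - v = (1 - μ) • q + μ • (q' - v) := by
      rw [hq'', hμ]; match_scalars <;> field_simp <;> try ring
    have heq := lemB' hN hSC hq1 hq'vN hμ0 hμ1 (by rw [← hmid]; exact hq2)
    have e : (c + 1) • v = q - ((q - c • v) - v) := by module
    rw [← hq'', ← heq, sub_self] at e
    rcases smul_eq_zero.1 e with h' | h'
    · linarith
    · exact hv h'

lemma exists_inter (hN : IsNorm N) {v : ℝ × ℝ} (hv : N v = 1) :
    ∃ x : ℝ × ℝ, N x = 1 ∧ N (x - v) = 1 := by
  have hpos : ∀ z : ℝ × ℝ, z ≠ 0 → 0 < N z := by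
    intro z hz
    rcases lt_or_eq_of_le (nonneg hN z) with h | h
    · exact h
    · exact absurd (hN.eq_zero_of z h.symm) hz
  set S : Set (ℝ × ℝ) := {z | N z = 1} with hS
  have hrank : 1 < Module.rank ℝ (ℝ × ℝ) := by
    rw [rank_prod', Module.rank_self]
    norm_num
  have hsph : IsConnected (Metric.sphere (0 : ℝ × ℝ) 1) :=
    isConnected_sphere hrank 0 zero_le_one
  set g : ℝ × ℝ → ℝ × ℝ := fun y => (N y)⁻¹ • y with hg
  have hgc : ContinuousOn g (Metric.sphere (0 : ℝ × ℝ) 1) := by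
    refine ContinuousOn.smul (f := fun y => (N y)⁻¹) (g := fun y => y) ?_ ?_
    · apply ContinuousOn.inv₀ (ncont hN).continuousOn
      intro y hy
      have hy0 : y ≠ 0 := by
        intro h
        rw [Metric.mem_sphere, h] at hy
        simp at hy
      exact ne_of_gt (hpos y hy0)
    · exact continuousOn_id
  have himg : g '' Metric.sphere (0 : ℝ × ℝ) 1 = S := by
    ext z
    constructor
    · rintro ⟨y, hy, rfl⟩
      have hy0 : y ≠ 0 := by
        intro h; rw [Metric.mem_sphere, h] at hy; simp at hy
      have hNy := hpos y hy0
      show N ((N y)⁻¹ • y) = 1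
      rw [hN.smul_eq, abs_of_pos (by positivity)]
      field_simp
    · intro hz
      have hz1 : N z = 1 := hz
      have hz0 : z ≠ 0 := by
        intro h; rw [h, nzero hN] at hz1; norm_num at hz1
      have hnz : ‖z‖ ≠ 0 := norm_ne_zero_iff.2 hz0
      refine ⟨‖z‖⁻¹ • z, ?_, ?_⟩
      · rw [Metric.mem_sphere, dist_zero_right, norm_smul, norm_inv, norm_norm]
        field_simp
      · show (N (‖z‖⁻¹ • z))⁻¹ • ‖z‖⁻¹ • z = z
        rw [hN.smul_eq, abs_of_pos (by positivity), hz1, mul_one, inv_inv, smul_smul]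
        field_simp
        simp
  have hconn : IsConnected S := by
    rw [← himg]
    exact hsph.image g hgc
  set f : ℝ × ℝ → ℝ := fun y => N (y - v) with hf
  have hfc : ContinuousOn f S := ((ncont hN).comp (continuous_sub_right v)).continuousOn
  have hvS : v ∈ S := hv
  have hnvS : -v ∈ S := by
    show N (-v) = 1
    rw [nneg hN, hv]
  have hIcc : Set.Icc (f v) (f (-v)) ⊆ f '' S :=
    hconn.isPreconnected.intermediate_value hvS hnvS hfc
  have hfv : f v = 0 := by
    show N (v - v) = 0
    rw [sub_self, nzero hN]
  have hfnv : f (-v) = 2 := by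
    show N (-v - v) = 2
    have h2 : -v - v = (-2 : ℝ) • v := by module
    rw [h2, hN.smul_eq, hv]
    norm_num
  have h1 : (1 : ℝ) ∈ Set.Icc (f v) (f (-v)) := by
    rw [hfv, hfnv]; exact ⟨zero_le_one, one_le_two⟩
  obtain ⟨x, hxS, hxf⟩ := hIcc h1
  exact ⟨x, hxS, hxf⟩

end URTCaux

/-- Every strictly convex norm on `ℝ²` (no non-degenerate segment on the unit sphere)
is a URTC-norm. -/
theorem URTC_of_strictly_convex (N : ℝ × ℝ → ℝ) (hN : IsNorm N)
    (hSC : ∀ x y : ℝ × ℝ, N x = 1 → N y = 1 →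
      segment ℝ x y ⊆ {z : ℝ × ℝ | N z = 1} → x = y) :
    IsURTC N := by
  intro a b hab
  open URTCaux in
  set v := a - b with hvdef
  have hv : N v = 1 := hab
  have hv0 : v ≠ 0 := by
    intro h
    rw [h, URTCaux.nzero hN] at hv
    norm_num at hv
  obtain ⟨x0, hx1, hx2⟩ := URTCaux.exists_inter hN hv
  set y0 := v - x0 with hy0def
  have hy1 : N y0 = 1 := by
    have : y0 = -(x0 - v) := by rw [hy0def]; abel
    rw [this, URTCaux.nneg hN, hx2]
  have hy2 : N (y0 - v) = 1 := by
    have : y0 - v = -x0 := by rw [hy0def]; abel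
    rw [this, URTCaux.nneg hN, hx1]
  have hxy : x0 ≠ y0 := by
    intro h
    have hv2 : v = (2:ℝ) • x0 := by
      rw [hy0def] at h
      have : v = x0 + x0 := by
        have := congrArg (fun z => z + x0) h
        simpa [sub_add_cancel] using this.symm
      rw [this]; module
    rw [hv2, hN.smul_eq, hx1] at hv
    norm_num at hv
  set E : Set (ℝ × ℝ) := {y | N y = 1 ∧ N (y - v) = 1} with hE
  have hx0E : x0 ∈ E := ⟨hx1, hx2⟩
  have hy0E : y0 ∈ E := ⟨hy1, hy2⟩
  -- key lemmas specialized
  have key1 : ∀ w1 w2 : ℝ × ℝ, w1 ∈ E → w2 ∈ E →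
      w1.1 * v.2 - w1.2 * v.1 = w2.1 * v.2 - w2.2 * v.1 → w1 = w2 := by
    intro w1 w2 h1 h2 hψ
    obtain ⟨c, hc⟩ := URTCaux.collin hv0 hψ.symm
    exact URTCaux.lemL1 hN hSC hv0 h1.1 h1.2 h2.1 h2.2 hc
  have key2 : ∀ w1 w2 w3 : ℝ × ℝ, w1 ∈ E → w2 ∈ E → w3 ∈ E →
      w1.1 * v.2 - w1.2 * v.1 < w2.1 * v.2 - w2.2 * v.1 →
      w2.1 * v.2 - w2.2 * v.1 < w3.1 * v.2 - w3.2 * v.1 → False := by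
    intro w1 w2 w3 h1 h2 h3 ha' hb'
    exact URTCaux.lemL2 hN hSC hv0 h1.1 h1.2 h2.1 h2.2 h3.1 h3.2 ha' hb'
  have hEeq : E = {x0, y0} := by
    apply Set.eq_of_subset_of_subset
    · intro z hz
      by_contra hn
      simp only [Set.mem_insert_iff, Set.mem_singleton_iff, not_or] at hn
      obtain ⟨hzx, hzy⟩ := hn
      have ht12 : x0.1 * v.2 - x0.2 * v.1 ≠ y0.1 * v.2 - y0.2 * v.1 :=
        fun h => hxy (key1 _ _ hx0E hy0E h)
      have ht13 : x0.1 * v.2 - x0.2 * v.1 ≠ z.1 * v.2 - z.2 * v.1 :=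
        fun h => hzx (key1 _ _ hx0E hz h).symm
      have ht23 : y0.1 * v.2 - y0.2 * v.1 ≠ z.1 * v.2 - z.2 * v.1 :=
        fun h => hzy (key1 _ _ hy0E hz h).symm
      rcases lt_trichotomy (x0.1 * v.2 - x0.2 * v.1) (y0.1 * v.2 - y0.2 * v.1) with h1 | h1 | h1
      · rcases lt_trichotomy (y0.1 * v.2 - y0.2 * v.1) (z.1 * v.2 - z.2 * v.1) with h2 | h2 | h2
        · exact key2 x0 y0 z hx0E hy0E hz h1 h2
        · exact ht23 h2
        · rcases lt_trichotomy (x0.1 * v.2 - x0.2 * v.1) (z.1 * v.2 - z.2 * v.1) with h3 | h3 | h3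
          · exact key2 x0 z y0 hx0E hz hy0E h3 h2
          · exact ht13 h3
          · exact key2 z x0 y0 hz hx0E hy0E h3 h1
      · exact ht12 h1
      · rcases lt_trichotomy (x0.1 * v.2 - x0.2 * v.1) (z.1 * v.2 - z.2 * v.1) with h2 | h2 | h2
        · exact key2 y0 x0 z hy0E hx0E hz h1 h2
        · exact ht13 h2
        · rcases lt_trichotomy (y0.1 * v.2 - y0.2 * v.1) (z.1 * v.2 - z.2 * v.1) with h3 | h3 | h3
          · exact key2 y0 z x0 hy0E hz hx0E h3 h2
          · exact ht23 h3
          · exact key2 z y0 x0 hz hy0E hx0E h3 h1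
    · intro z hz
      rcases hz with rfl | rfl
      · exact hx0E
      · exact hy0E
  have hTE : {x : ℝ × ℝ | N (a - x) = 1 ∧ N (b - x) = 1} = (fun y => a - y) '' E := by
    ext x
    simp only [Set.mem_setOf_eq, Set.mem_image, hE]
    constructor
    · rintro ⟨h1, h2⟩
      refine ⟨a - x, ⟨h1, ?_⟩, by abel⟩
      have : a - x - v = b - x := by rw [hvdef]; abel
      rw [this]; exact h2
    · rintro ⟨y, ⟨h1, h2⟩, rfl⟩
      constructor
      · have : a - (a - y) = y := by abel
        rw [this]; exact h1
      · have : b - (a - y) = y - v := by rw [hvdef]; abel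
        rw [this]; exact h2
  rw [hTE]
  have hinj : Set.InjOn (fun y => a - y) E := by
    intro u _ w _ h
    have : a - u = a - w := h
    have := congrArg (fun z => a - z) this
    simpa using this
  rw [hinj.encard_image, hEeq, Set.encard_pair hxy]
end

section
/- Let ‖·‖ be an arbitrary norm on ℝ², and let a, b ∈ ℝ² with ‖a − b‖ = 1. Then there exists a point x ∈ ℝ² satisfying ‖a − x‖ = 1 and ‖b − x‖ = 1; moreover, if x is such a point, then a + b − x also satisfies ‖a − (a+b−x)‖ = 1 and ‖b − (a+b−x)‖ = 1 and a + b − x ≠ x. -/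
lemma IsNorm.zero {N : ℝ × ℝ → ℝ} (hN : IsNorm N) : N 0 = 0 := by
  have := hN.smul_eq 0 0
  simpa using this

lemma IsNorm.neg {N : ℝ × ℝ → ℝ} (hN : IsNorm N) (x : ℝ × ℝ) : N (-x) = N x := by
  have := hN.smul_eq (-1) x
  simpa using this

lemma IsNorm.nonneg {N : ℝ × ℝ → ℝ} (hN : IsNorm N) (x : ℝ × ℝ) : 0 ≤ N x := by
  have h := hN.add_le x (-x)
  rw [add_neg_cancel, hN.zero, hN.neg] at h
  linarith

lemma IsNorm.sub_le {N : ℝ × ℝ → ℝ} (hN : IsNorm N) (x y : ℝ × ℝ) :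
    N x - N y ≤ N (x - y) := by
  have h := hN.add_le (x - y) y
  simpa using h

lemma IsNorm.continuous {N : ℝ × ℝ → ℝ} (hN : IsNorm N) : Continuous N := by
  have hbound : ∀ x : ℝ × ℝ, N x ≤ (N (1, 0) + N (0, 1)) * ‖x‖ := by
    intro x
    have hx : x = x.1 • ((1 : ℝ), (0 : ℝ)) + x.2 • ((0 : ℝ), (1 : ℝ)) := by
      ext <;> simp
    calc N x ≤ N (x.1 • ((1:ℝ),(0:ℝ))) + N (x.2 • ((0:ℝ),(1:ℝ))) := by
            conv_lhs => rw [hx]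
            exact hN.add_le _ _
      _ = |x.1| * N (1,0) + |x.2| * N (0,1) := by rw [hN.smul_eq, hN.smul_eq]
      _ ≤ (N (1,0) + N (0,1)) * ‖x‖ := by
          have h1 : |x.1| ≤ ‖x‖ := by
            simpa using norm_fst_le x
          have h2 : |x.2| ≤ ‖x‖ := by
            simpa using norm_snd_le x
          have hn1 := hN.nonneg (1, 0)
          have hn2 := hN.nonneg (0, 1)
          nlinarith [abs_nonneg x.1, abs_nonneg x.2]
  rw [Metric.continuous_iff]
  intro x ε hε
  set K := N (1, 0) + N (0, 1) with hK
  have hK0 : 0 ≤ K := by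
    have := hN.nonneg (1, 0); have := hN.nonneg (0, 1); linarith
  refine ⟨ε / (K + 1), by positivity, fun y hy => ?_⟩
  have hdiff : |N y - N x| ≤ N (y - x) := by
    rw [abs_le]
    constructor
    · have := hN.sub_le x y
      have h2 : N (x - y) = N (y - x) := by
        rw [← hN.neg (y - x)]; ring_nf
      linarith
    · have := hN.sub_le y x; linarith
  have hlip : N (y - x) ≤ K * ‖y - x‖ := hbound _
  have hd : dist y x = ‖y - x‖ := by rw [dist_eq_norm]
  rw [Real.dist_eq]
  have hnn : 0 ≤ ‖y - x‖ := norm_nonneg _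
  calc |N y - N x| ≤ K * ‖y - x‖ := le_trans hdiff hlip
    _ ≤ K * (ε / (K + 1)) := by
        apply mul_le_mul_of_nonneg_left _ hK0
        rw [← hd]; exact le_of_lt hy
    _ < ε := by
        rw [div_eq_inv_mul]
        have : K * ((K + 1)⁻¹ * ε) = (K / (K + 1)) * ε := by ring
        rw [this]
        have hlt : K / (K + 1) < 1 := by
          rw [div_lt_one (by linarith)]; linarith
        nlinarith [div_nonneg hK0 (by linarith : (0:ℝ) ≤ K + 1)]

/-- For any norm on `ℝ²` and `N (a - b) = 1`, a point at distance `1` from both `a`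
and `b` exists; and if `x` is such a point, then so is `a + b - x`, which differs
from `x`. -/
theorem exists_unit_apex (N : ℝ × ℝ → ℝ) (hN : IsNorm N)
    (a b : ℝ × ℝ) (hab : N (a - b) = 1) :
    (∃ x : ℝ × ℝ, N (a - x) = 1 ∧ N (b - x) = 1) ∧
      ∀ x : ℝ × ℝ, N (a - x) = 1 → N (b - x) = 1 →
        N (a - (a + b - x)) = 1 ∧ N (b - (a + b - x)) = 1 ∧ a + b - x ≠ x := by
  constructor
  · -- existence via IVT
    set u : ℝ × ℝ := a - b with hu
    have hu1 : N u = 1 := hab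
    have hune : u ≠ 0 := by
      intro h
      rw [h, hN.zero] at hu1
      norm_num at hu1
    set w : ℝ × ℝ := (-u.2, u.1) with hw
    set c : ℝ → ℝ × ℝ := fun θ => Real.cos θ • u + Real.sin θ • w with hc
    have hcne : ∀ θ, c θ ≠ 0 := by
      intro θ h
      apply hune
      have h1 : Real.cos θ * u.1 - Real.sin θ * u.2 = 0 := by
        have := congrArg Prod.fst h
        simpa [hc, hw, sub_eq_add_neg] using this
      have h2 : Real.cos θ * u.2 + Real.sin θ * u.1 = 0 := by
        have := congrArg Prod.snd h
        simpa [hc, hw] using this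
      have hpyth := Real.sin_sq_add_cos_sq θ
      have hu1' : u.1 = 0 := by
        linear_combination Real.cos θ * h1 + Real.sin θ * h2 - u.1 * hpyth
      have hu2' : u.2 = 0 := by
        linear_combination Real.cos θ * h2 - Real.sin θ * h1 - u.2 * hpyth
      ext <;> simp [hu1', hu2']
    have hcpos : ∀ θ, 0 < N (c θ) := by
      intro θ
      rcases (hN.nonneg (c θ)).lt_or_eq with h | h
      · exact h
      · exact absurd (hN.eq_zero_of _ h.symm) (hcne θ)
    set s : ℝ → ℝ × ℝ := fun θ => (N (c θ))⁻¹ • c θ with hs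
    set f : ℝ → ℝ := fun θ => N (s θ - u) with hf
    have hccont : Continuous c := by
      apply Continuous.add
      · exact (Real.continuous_cos).smul continuous_const
      · exact (Real.continuous_sin).smul continuous_const
    have hfcont : Continuous f := by
      apply hN.continuous.comp
      apply Continuous.sub _ continuous_const
      exact ((hN.continuous.comp hccont).inv₀ (fun θ => (hcpos θ).ne')).smul hccont
    have hNs : ∀ θ, N (s θ) = 1 := by
      intro θ
      rw [hs]
      simp only
      rw [hN.smul_eq, abs_inv, abs_of_pos (hcpos θ)]
      exact inv_mul_cancel₀ (hcpos θ).ne'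
    have hf0 : f 0 = 0 := by
      have hc0 : c 0 = u := by simp [hc]
      simp only [hf, hs, hc0, hu1]
      norm_num [hN.zero]
    have hfpi : f Real.pi = 2 := by
      have hcpi : c Real.pi = -u := by simp [hc]
      have hNu : N (-u) = 1 := by rw [hN.neg]; exact hu1
      simp only [hf, hs, hcpi, hNu]
      have : (1 : ℝ)⁻¹ • (-u) - u = (-2 : ℝ) • u := by
        ext <;> simp <;> ring
      rw [this, hN.smul_eq, hu1]
      norm_num
    have h1mem : (1 : ℝ) ∈ Set.Icc (f 0) (f Real.pi) := by
      rw [hf0, hfpi]; constructor <;> norm_num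
    obtain ⟨θ, _, hθ⟩ := intermediate_value_Icc Real.pi_nonneg hfcont.continuousOn h1mem
    refine ⟨a - s θ, ?_, ?_⟩
    · have : a - (a - s θ) = s θ := by abel
      rw [this, hNs]
    · have : b - (a - s θ) = s θ - u := by rw [hu]; abel
      rw [this]
      exact hθ
  · intro x hax hbx
    refine ⟨?_, ?_, ?_⟩
    · have : a - (a + b - x) = -(b - x) := by abel
      rw [this, hN.neg]; exact hbx
    · have : b - (a + b - x) = -(a - x) := by abel
      rw [this, hN.neg]; exact hax
    · intro h
      have h2 : a - b = (2 : ℝ) • (a - x) := by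
        linear_combination (norm := module) -h
      rw [h2, hN.smul_eq, hax] at hab
      norm_num at hab
end
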